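/- Let (C•, d) be a finite-dimensional Hilbert cochain complex, and set A_p := Tr(exp(−t Δ_p^{cl})) for p ≥ 1 and A_0 := 0, where Δ_p^{cl} is the restriction of Δ_p to im d_{p−1}. Then for every t > 0, Σ_p (−1)^p p (Tr(exp(−t Δ_p)) − dim H^p(C•,d)) = Σ_p (−1)^p Tr(exp(−t Δ_p^{cl})). -/

import Mathlib

/-- Laplacians `Δ_p = d_p* d_p + d_{p-1} d_{p-1}*` (convention `d_{-1} = 0`). -/
noncomputable def Lap (C : ℕ → Type) [∀ p, NormedAddCommGroup (C p)]
    [∀ p, InnerProductSpace ℂ (C p)] [∀ p, FiniteDimensional ℂ (C p)]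
    (d : ∀ p, C p →ₗ[ℂ] C (p + 1)) : ∀ p, C p →ₗ[ℂ] C p
  | 0 => LinearMap.adjoint (d 0) ∘ₗ d 0
  | (p + 1) => LinearMap.adjoint (d (p + 1)) ∘ₗ d (p + 1) + d p ∘ₗ LinearMap.adjoint (d p)

/-- `dim H^p(C•,d)`. -/
noncomputable def hdim (C : ℕ → Type) [∀ p, NormedAddCommGroup (C p)]
    [∀ p, InnerProductSpace ℂ (C p)] [∀ p, FiniteDimensional ℂ (C p)]
    (d : ∀ p, C p →ₗ[ℂ] C (p + 1)) : ℕ → ℕ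
  | 0 => Module.finrank ℂ (LinearMap.ker (d 0))
  | (p + 1) =>
      Module.finrank ℂ
        (↥(LinearMap.ker (d (p + 1))) ⧸
          Submodule.comap (LinearMap.ker (d (p + 1))).subtype (LinearMap.range (d p)))

/-- `Tr (exp (-t T))`. -/
noncomputable def heatTr {E : Type*} [NormedAddCommGroup E] [InnerProductSpace ℂ E]
    [FiniteDimensional ℂ E] (T : E →ₗ[ℂ] E) (t : ℝ) : ℂ :=
  LinearMap.trace ℂ E
    (NormedSpace.exp ((-(t : ℂ)) • LinearMap.toContinuousLinearMap T)).toLinearMap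


set_option maxHeartbeats 1000000
set_option linter.unusedSectionVars false

/-! ### Auxiliary heat-trace machinery -/

/-- heat trace on finite-dimensional normed spaces (same formula as `heatTr`). -/
noncomputable def hTr' {E : Type*} [NormedAddCommGroup E] [NormedSpace ℂ E]
    [FiniteDimensional ℂ E] (T : E →ₗ[ℂ] E) (t : ℝ) : ℂ :=
  LinearMap.trace ℂ E
    (NormedSpace.exp ((-(t : ℂ)) • LinearMap.toContinuousLinearMap T)).toLinearMap

lemma heatTr_eq_hTr' {E : Type*} [NormedAddCommGroup E] [InnerProductSpace ℂ E]
    [FiniteDimensional ℂ E] (T : E →ₗ[ℂ] E) (t : ℝ) : heatTr T t = hTr' T t := rfl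

lemma hTr'_zero {E : Type*} [NormedAddCommGroup E] [NormedSpace ℂ E]
    [FiniteDimensional ℂ E] (t : ℝ) : hTr' (0 : E →ₗ[ℂ] E) t = Module.finrank ℂ E := by
  unfold hTr'
  rw [map_zero, smul_zero, NormedSpace.exp_zero]
  have : (1 : E →L[ℂ] E).toLinearMap = LinearMap.id := rfl
  rw [this, LinearMap.trace_id]

lemma hTr'_subsingleton {E : Type*} [NormedAddCommGroup E] [NormedSpace ℂ E]
    [FiniteDimensional ℂ E] [Subsingleton E] (T : E →ₗ[ℂ] E) (t : ℝ) : hTr' T t = 0 := by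
  unfold hTr'
  rw [Subsingleton.elim
    ((NormedSpace.exp ((-(t : ℂ)) • LinearMap.toContinuousLinearMap T)).toLinearMap) 0, map_zero]

section Conj
variable {E F : Type*} [NormedAddCommGroup E] [NormedSpace ℂ E] [FiniteDimensional ℂ E]
  [NormedAddCommGroup F] [NormedSpace ℂ F] [FiniteDimensional ℂ F]

/-- conjugation ring hom on continuous endomorphisms -/
noncomputable def conjRH (e : F ≃L[ℂ] E) : (F →L[ℂ] F) →+* (E →L[ℂ] E) where
  toFun A := (e : F →L[ℂ] E).comp (A.comp (e.symm : E →L[ℂ] F))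
  map_one' := by ext x; simp
  map_mul' A B := by ext x; simp
  map_zero' := by ext x; simp
  map_add' A B := by ext x; simp

lemma conjRH_continuous (e : F ≃L[ℂ] E) : Continuous (conjRH e) := by
  let L : (F →L[ℂ] F) →ₗ[ℂ] (E →L[ℂ] E) :=
    { toFun := fun A => (e : F →L[ℂ] E).comp (A.comp (e.symm : E →L[ℂ] F))
      map_add' := fun A B => by ext x; simp
      map_smul' := fun c A => by ext x; simp }
  exact L.continuous_of_finiteDimensional

lemma conjRH_smul (e : F ≃L[ℂ] E) (c : ℂ) (A : F →L[ℂ] F) :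
    conjRH e (c • A) = c • conjRH e A := by
  ext x; simp [conjRH]

lemma hTr'_congr (e : F ≃ₗ[ℂ] E) (S : F →ₗ[ℂ] F) (T : E →ₗ[ℂ] E)
    (hc : T ∘ₗ (e : F →ₗ[ℂ] E) = (e : F →ₗ[ℂ] E) ∘ₗ S) (t : ℝ) :
    hTr' T t = hTr' S t := by
  letI : NormedAlgebra ℚ (E →L[ℂ] E) := NormedAlgebra.restrictScalars ℚ ℂ _
  letI : NormedAlgebra ℚ (F →L[ℂ] F) := NormedAlgebra.restrictScalars ℚ ℂ _
  let e' : F ≃L[ℂ] E := e.toContinuousLinearEquiv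
  have hT : LinearMap.toContinuousLinearMap T = conjRH e' (LinearMap.toContinuousLinearMap S) := by
    ext x
    obtain ⟨y, rfl⟩ := e.surjective x
    have := LinearMap.congr_fun hc y
    simpa [conjRH, e'] using this
  have hexp : NormedSpace.exp ((-(t : ℂ)) • LinearMap.toContinuousLinearMap T)
      = conjRH e' (NormedSpace.exp ((-(t : ℂ)) • LinearMap.toContinuousLinearMap S)) := by
    rw [hT, ← conjRH_smul, NormedSpace.map_exp (conjRH e') (conjRH_continuous e')]
  unfold hTr'
  rw [hexp]
  have : ((conjRH e' (NormedSpace.exp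
        ((-(t : ℂ)) • LinearMap.toContinuousLinearMap S))).toLinearMap)
      = e.conj (NormedSpace.exp
        ((-(t : ℂ)) • LinearMap.toContinuousLinearMap S)).toLinearMap := by
    ext x; simp [conjRH, LinearEquiv.conj_apply, e']
  rw [this, LinearMap.trace_conj']

/-- prodMap ring hom -/
noncomputable def prodRH : ((E →L[ℂ] E) × (F →L[ℂ] F)) →+* (E × F →L[ℂ] E × F) where
  toFun A := A.1.prodMap A.2
  map_one' := by ext x <;> simp
  map_mul' A B := by ext x <;> simp
  map_zero' := by ext x <;> simp
  map_add' A B := by ext x <;> simp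

lemma prodRH_continuous : Continuous (prodRH (E := E) (F := F)) := by
  let L : ((E →L[ℂ] E) × (F →L[ℂ] F)) →ₗ[ℂ] (E × F →L[ℂ] E × F) :=
    { toFun := fun A => A.1.prodMap A.2
      map_add' := fun A B => by ext x <;> simp
      map_smul' := fun c A => by ext x <;> simp }
  exact L.continuous_of_finiteDimensional

lemma hTr'_prodMap (S : E →ₗ[ℂ] E) (T : F →ₗ[ℂ] F) (t : ℝ) :
    hTr' (S.prodMap T) t = hTr' S t + hTr' T t := by
  letI : NormedAlgebra ℚ (E →L[ℂ] E) := NormedAlgebra.restrictScalars ℚ ℂ _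
  letI : NormedAlgebra ℚ (F →L[ℂ] F) := NormedAlgebra.restrictScalars ℚ ℂ _
  letI : NormedAlgebra ℚ (E × F →L[ℂ] E × F) := NormedAlgebra.restrictScalars ℚ ℂ _
  have h1 : LinearMap.toContinuousLinearMap (S.prodMap T)
      = prodRH (LinearMap.toContinuousLinearMap S, LinearMap.toContinuousLinearMap T) := by
    ext x <;> rfl
  have hsmul : ((-(t : ℂ)) • prodRH (LinearMap.toContinuousLinearMap S,
        LinearMap.toContinuousLinearMap T))
      = prodRH ((-(t : ℂ)) • (LinearMap.toContinuousLinearMap S,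
        LinearMap.toContinuousLinearMap T)) := by
    ext x <;> simp [prodRH]
  have hexp : NormedSpace.exp ((-(t : ℂ)) • LinearMap.toContinuousLinearMap (S.prodMap T))
      = prodRH (NormedSpace.exp ((-(t : ℂ)) • (LinearMap.toContinuousLinearMap S,
        LinearMap.toContinuousLinearMap T))) := by
    rw [h1, hsmul, NormedSpace.map_exp (prodRH (E:=E) (F:=F)) prodRH_continuous]
  unfold hTr'
  rw [hexp]
  have hP : NormedSpace.exp ((-(t : ℂ)) • (LinearMap.toContinuousLinearMap S,
        LinearMap.toContinuousLinearMap T))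
      = (NormedSpace.exp ((-(t : ℂ)) • LinearMap.toContinuousLinearMap S),
         NormedSpace.exp ((-(t : ℂ)) • LinearMap.toContinuousLinearMap T)) := by
    refine Prod.ext ?_ ?_
    · rw [Prod.fst_exp]; rfl
    · rw [Prod.snd_exp]; rfl
  rw [hP]
  have : ((prodRH ((NormedSpace.exp ((-(t : ℂ)) • LinearMap.toContinuousLinearMap S)),
      (NormedSpace.exp ((-(t : ℂ)) • LinearMap.toContinuousLinearMap T)))).toLinearMap)
      = LinearMap.prodMap
          (NormedSpace.exp ((-(t : ℂ)) • LinearMap.toContinuousLinearMap S)).toLinearMap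
          (NormedSpace.exp ((-(t : ℂ)) • LinearMap.toContinuousLinearMap T)).toLinearMap := by
    ext x <;> rfl
  rw [this, LinearMap.trace_prodMap']

end Conj

/-! ### Orthogonality facts -/

lemma orth_range_eq_ker_adjoint {E F : Type*} [NormedAddCommGroup E] [InnerProductSpace ℂ E]
    [FiniteDimensional ℂ E] [NormedAddCommGroup F] [InnerProductSpace ℂ F]
    [FiniteDimensional ℂ F] (A : E →ₗ[ℂ] F) :
    (LinearMap.range A)ᗮ = LinearMap.ker (LinearMap.adjoint A) := by
  ext x
  simp only [Submodule.mem_orthogonal, LinearMap.mem_ker]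
  constructor
  · intro hx
    have h1 : ∀ y : E, inner ℂ (y : E) (LinearMap.adjoint A x) = (0 : ℂ) := by
      intro y
      rw [LinearMap.adjoint_inner_right]
      exact hx (A y) ⟨y, rfl⟩
    have := h1 (LinearMap.adjoint A x)
    rwa [inner_self_eq_zero] at this
  · rintro hx u ⟨y, rfl⟩
    calc inner ℂ (A y) x = inner ℂ y (LinearMap.adjoint A x) :=
          (LinearMap.adjoint_inner_right A y x).symm
    _ = (0:ℂ) := by rw [hx, inner_zero_right]

lemma orth_range_adjoint_eq_ker {E F : Type*} [NormedAddCommGroup E] [InnerProductSpace ℂ E]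
    [FiniteDimensional ℂ E] [NormedAddCommGroup F] [InnerProductSpace ℂ F]
    [FiniteDimensional ℂ F] (A : E →ₗ[ℂ] F) :
    (LinearMap.range (LinearMap.adjoint A))ᗮ = LinearMap.ker A := by
  rw [orth_range_eq_ker_adjoint, LinearMap.adjoint_adjoint]

/-! ### The Hodge decomposition step -/

open Module LinearMap

lemma hodge_step (C : ℕ → Type) [∀ p, NormedAddCommGroup (C p)]
    [∀ p, InnerProductSpace ℂ (C p)] [∀ p, FiniteDimensional ℂ (C p)]
    (d : ∀ p, C p →ₗ[ℂ] C (p + 1))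
    (hd : ∀ p, d (p + 1) ∘ₗ d p = 0)
    (h : ∀ p, ∀ x ∈ LinearMap.range (d p), Lap C d (p + 1) x ∈ LinearMap.range (d p))
    (t : ℝ) (q : ℕ) :
    heatTr (Lap C d (q + 1)) t
      = heatTr ((Lap C d (q + 1)).restrict (h q)) t
        + heatTr ((Lap C d (q + 1 + 1)).restrict (h (q + 1))) t
        + (hdim C d (q + 1) : ℂ) := by
  classical
  have hΔ : Lap C d (q+1)
      = LinearMap.adjoint (d (q+1)) ∘ₗ d (q+1) + d q ∘ₗ LinearMap.adjoint (d q) := rfl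
  have hCl_le : LinearMap.range (d q) ≤ LinearMap.ker (d (q+1)) := by
    rintro x ⟨a, rfl⟩
    exact LinearMap.congr_fun (hd q) a
  -- Δ vanishes on H, and invariances
  have hΔ0 : ∀ v ∈ (LinearMap.ker (d (q+1)) ⊓ LinearMap.ker (LinearMap.adjoint (d q))),
      Lap C d (q+1) v = 0 := by
    rintro v ⟨hv1, hv2⟩
    rw [hΔ]
    simp only [LinearMap.add_apply, LinearMap.comp_apply]
    rw [LinearMap.mem_ker.mp hv1, LinearMap.mem_ker.mp hv2]
    simp
  have hinvH : ∀ x ∈ (LinearMap.ker (d (q+1)) ⊓ LinearMap.ker (LinearMap.adjoint (d q))),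
      Lap C d (q+1) x ∈ (LinearMap.ker (d (q+1)) ⊓ LinearMap.ker (LinearMap.adjoint (d q))) := by
    intro x hx
    rw [hΔ0 x hx]
    exact zero_mem _
  have hinvCcl : ∀ x ∈ LinearMap.range (LinearMap.adjoint (d (q+1))),
      Lap C d (q+1) x ∈ LinearMap.range (LinearMap.adjoint (d (q+1))) := by
    rintro x ⟨y, rfl⟩
    have h2 : LinearMap.adjoint (d q) (LinearMap.adjoint (d (q+1)) y) = 0 := by
      have : LinearMap.adjoint (d q) ∘ₗ LinearMap.adjoint (d (q+1)) = 0 := by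
        rw [← LinearMap.adjoint_comp, hd q, map_zero]
      exact LinearMap.congr_fun this y
    rw [hΔ]
    simp only [LinearMap.add_apply, LinearMap.comp_apply, h2, map_zero, add_zero]
    exact ⟨d (q+1) (LinearMap.adjoint (d (q+1)) y), rfl⟩
  -- pairwise orthogonality
  have oClH : ∀ u ∈ LinearMap.range (d q),
      ∀ v ∈ (LinearMap.ker (d (q+1)) ⊓ LinearMap.ker (LinearMap.adjoint (d q))),
      inner ℂ (u : C (q+1)) (v : C (q+1)) = (0:ℂ) := by
    rintro u ⟨a, rfl⟩ v ⟨hv1, hv2⟩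
    rw [← LinearMap.adjoint_inner_right (d q) a v, LinearMap.mem_ker.mp hv2, inner_zero_right]
  have oClCcl : ∀ u ∈ LinearMap.range (d q),
      ∀ w ∈ LinearMap.range (LinearMap.adjoint (d (q+1))),
      inner ℂ (u : C (q+1)) (w : C (q+1)) = (0:ℂ) := by
    rintro u ⟨a, rfl⟩ w ⟨b, rfl⟩
    rw [LinearMap.adjoint_inner_right (d (q+1))]
    have hz : d (q+1) (d q a) = 0 := LinearMap.congr_fun (hd q) a
    rw [hz, inner_zero_left]
  have oHCcl : ∀ v ∈ (LinearMap.ker (d (q+1)) ⊓ LinearMap.ker (LinearMap.adjoint (d q))),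
      ∀ w ∈ LinearMap.range (LinearMap.adjoint (d (q+1))),
      inner ℂ (v : C (q+1)) (w : C (q+1)) = (0:ℂ) := by
    rintro v ⟨hv1, hv2⟩ w ⟨b, rfl⟩
    rw [LinearMap.adjoint_inner_right (d (q+1)), LinearMap.mem_ker.mp hv1, inner_zero_left]
  set Cl : Submodule ℂ (C (q+1)) := LinearMap.range (d q) with hCldef
  set Ccl : Submodule ℂ (C (q+1)) := LinearMap.range (LinearMap.adjoint (d (q+1))) with hCcldef
  set H : Submodule ℂ (C (q+1)) :=
    LinearMap.ker (d (q+1)) ⊓ LinearMap.ker (LinearMap.adjoint (d q)) with hHdef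
  -- the equivalence Φ
  set Φ : (↥Cl × (↥H × ↥Ccl)) →ₗ[ℂ] C (q+1) := Cl.subtype.coprod ((H.subtype).coprod Ccl.subtype)
    with hΦ
  have hΦapp : ∀ u : ↥Cl, ∀ v : ↥H, ∀ w : ↥Ccl,
      Φ (u, (v, w)) = (u : C (q+1)) + ((v : C (q+1)) + (w : C (q+1))) := by
    intro u v w; simp [hΦ]
  have hinj : Function.Injective Φ := by
    rw [← LinearMap.ker_eq_bot, LinearMap.ker_eq_bot']
    rintro ⟨u, v, w⟩ h0
    rw [hΦapp u v w] at h0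
    have hu : (u : C (q+1)) = 0 := by
      have h1 : inner ℂ (u : C (q+1)) ((u : C (q+1)) + ((v : C (q+1)) + (w : C (q+1)))) = (0:ℂ) := by
        rw [h0, inner_zero_right]
      rw [inner_add_right, inner_add_right, oClH u u.2 v v.2, oClCcl u u.2 w w.2,
        add_zero, add_zero] at h1
      rwa [inner_self_eq_zero] at h1
    have hv : (v : C (q+1)) = 0 := by
      have h1 : inner ℂ (v : C (q+1)) ((u : C (q+1)) + ((v : C (q+1)) + (w : C (q+1)))) = (0:ℂ) := by
        rw [h0, inner_zero_right]
      rw [inner_add_right, inner_add_right, inner_eq_zero_symm.mp (oClH u u.2 v v.2),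
        oHCcl v v.2 w w.2, add_zero, zero_add] at h1
      rwa [inner_self_eq_zero] at h1
    have hw : (w : C (q+1)) = 0 := by
      rw [hu, hv, zero_add, zero_add] at h0
      exact h0
    ext <;> simp [hu, hv, hw]
  -- dimensions
  have o1 : Cclᗮ = LinearMap.ker (d (q+1)) := orth_range_adjoint_eq_ker _
  have o2 : Clᗮ = LinearMap.ker (LinearMap.adjoint (d q)) := orth_range_eq_ker_adjoint _
  have hHeq : H = Clᗮ ⊓ LinearMap.ker (d (q+1)) := by rw [o2, hHdef, inf_comm]
  have eq1 : Module.finrank ℂ Ccl + Module.finrank ℂ (LinearMap.ker (d (q+1)))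
      = Module.finrank ℂ (C (q+1)) := by
    have := Submodule.finrank_add_finrank_orthogonal Ccl
    rwa [o1] at this
  have eq2 : Module.finrank ℂ Cl + Module.finrank ℂ H
      = Module.finrank ℂ (LinearMap.ker (d (q+1))) := by
    have := Submodule.finrank_add_inf_finrank_orthogonal hCl_le
    rwa [← hHeq] at this
  have hrank : Module.finrank ℂ (↥Cl × (↥H × ↥Ccl)) = Module.finrank ℂ (C (q+1)) := by
    rw [Module.finrank_prod, Module.finrank_prod]
    omega
  set Φe : (↥Cl × (↥H × ↥Ccl)) ≃ₗ[ℂ] C (q+1) := LinearMap.linearEquivOfInjective Φ hinj hrank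
    with hΦe
  have hcoe : (Φe : (↥Cl × (↥H × ↥Ccl)) →ₗ[ℂ] C (q+1)) = Φ := by
    apply LinearMap.ext
    intro x
    exact Φ.linearEquivOfInjective_apply hinj hrank x
  -- intertwining
  have key : Lap C d (q+1) ∘ₗ Φ = Φ ∘ₗ
      (((Lap C d (q+1)).restrict (h q)).prodMap
        ((0 : ↥H →ₗ[ℂ] ↥H).prodMap ((Lap C d (q+1)).restrict hinvCcl))) := by
    apply LinearMap.ext
    rintro ⟨u, v, w⟩
    have hv0 : Lap C d (q+1) (v : C (q+1)) = 0 := hΔ0 v v.2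
    simp only [LinearMap.comp_apply, LinearMap.prodMap_apply, hΦapp, map_add, hv0,
      LinearMap.restrict_coe_apply, LinearMap.zero_apply, Submodule.coe_zero]
  have tr1 : hTr' (Lap C d (q+1)) t = hTr'
      (((Lap C d (q+1)).restrict (h q)).prodMap
        ((0 : ↥H →ₗ[ℂ] ↥H).prodMap ((Lap C d (q+1)).restrict hinvCcl))) t := by
    refine hTr'_congr Φe _ _ ?_ t
    rw [hcoe]; exact key
  -- the ccl ↔ cl(q+2) isomorphism
  have hψmem : ∀ x ∈ Ccl, d (q+1) x ∈ LinearMap.range (d (q+1)) := fun x _ => ⟨x, rfl⟩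
  set ψ : ↥Ccl →ₗ[ℂ] ↥(LinearMap.range (d (q+1))) := (d (q+1)).restrict hψmem with hψ
  have hψinj : Function.Injective ψ := by
    rw [← LinearMap.ker_eq_bot, LinearMap.ker_eq_bot']
    rintro ⟨x, hx⟩ h0
    have hx0 : d (q+1) x = 0 := by
      have := congrArg (Subtype.val) h0
      simpa [hψ, LinearMap.restrict_coe_apply] using this
    obtain ⟨y, rfl⟩ := hx
    have : inner ℂ (LinearMap.adjoint (d (q+1)) y) (LinearMap.adjoint (d (q+1)) y) = (0:ℂ) := by
      rw [LinearMap.adjoint_inner_left, hx0, inner_zero_right]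
    rw [inner_self_eq_zero] at this
    exact Subtype.ext this
  have hψrank : Module.finrank ℂ ↥Ccl = Module.finrank ℂ ↥(LinearMap.range (d (q+1))) := by
    have := LinearMap.finrank_range_add_finrank_ker (d (q+1))
    omega
  set ψe : ↥Ccl ≃ₗ[ℂ] ↥(LinearMap.range (d (q+1))) :=
    LinearMap.linearEquivOfInjective ψ hψinj hψrank with hψe
  have hψcoe : (ψe : ↥Ccl →ₗ[ℂ] ↥(LinearMap.range (d (q+1)))) = ψ := by
    apply LinearMap.ext
    intro x
    exact ψ.linearEquivOfInjective_apply hψinj hψrank x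
  have hcomm : ∀ z : C (q+1), Lap C d (q+1+1) (d (q+1) z) = d (q+1) (Lap C d (q+1) z) := by
    intro z
    show (LinearMap.adjoint (d (q+1+1)) ∘ₗ d (q+1+1)
        + d (q+1) ∘ₗ LinearMap.adjoint (d (q+1))) (d (q+1) z)
      = d (q+1) ((LinearMap.adjoint (d (q+1)) ∘ₗ d (q+1) + d q ∘ₗ LinearMap.adjoint (d q)) z)
    simp only [LinearMap.add_apply, LinearMap.comp_apply, map_add]
    have hz1 : d (q+1+1) (d (q+1) z) = 0 := LinearMap.congr_fun (hd (q+1)) z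
    have hz2 : d (q+1) (d q (LinearMap.adjoint (d q) z)) = 0 := LinearMap.congr_fun (hd q) _
    rw [hz1, hz2, map_zero, zero_add, add_zero]
  have hc2 : ((Lap C d (q+1+1)).restrict (h (q+1)))
        ∘ₗ (ψe : ↥Ccl →ₗ[ℂ] ↥(LinearMap.range (d (q+1))))
      = (ψe : ↥Ccl →ₗ[ℂ] ↥(LinearMap.range (d (q+1)))) ∘ₗ ((Lap C d (q+1)).restrict hinvCcl) := by
    rw [hψcoe]
    apply LinearMap.ext
    intro x
    apply Subtype.ext
    simp only [LinearMap.comp_apply, hψ, LinearMap.restrict_coe_apply]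
    exact hcomm (x : C (q+1))
  have tr2 : hTr' ((Lap C d (q+1+1)).restrict (h (q+1))) t
      = hTr' ((Lap C d (q+1)).restrict hinvCcl) t :=
    hTr'_congr ψe ((Lap C d (q+1)).restrict hinvCcl)
      ((Lap C d (q+1+1)).restrict (h (q+1))) hc2 t
  -- dimension of H equals hdim
  have hhdim : hdim C d (q+1) = Module.finrank ℂ H := by
    have e0 : hdim C d (q+1)
        = Module.finrank ℂ (↥(LinearMap.ker (d (q+1))) ⧸
            Submodule.comap (LinearMap.ker (d (q+1))).subtype (LinearMap.range (d q))) := rfl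
    have e3 : Module.finrank ℂ (Submodule.comap (LinearMap.ker (d (q+1))).subtype
          (LinearMap.range (d q)))
        = Module.finrank ℂ Cl := (Submodule.comapSubtypeEquivOfLe hCl_le).finrank_eq
    have e4 := Submodule.finrank_quotient_add_finrank
      (Submodule.comap (LinearMap.ker (d (q+1))).subtype (LinearMap.range (d q)))
    rw [e0]
    omega
  -- assemble
  rw [heatTr_eq_hTr', heatTr_eq_hTr', heatTr_eq_hTr', tr1, hTr'_prodMap, hTr'_prodMap,
    hTr'_zero, tr2, hhdim]
  ring

lemma alg_telescope (n : ℕ) (A : ℕ → ℂ) :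
    ∑ p ∈ Finset.range n, (-1:ℂ)^(p+1) * ((p:ℂ)+1) * (A p + A (p+1)) =
      ∑ p ∈ Finset.range n, (-1:ℂ)^(p+1) * A p + (-1:ℂ)^n * n * A n := by
  induction n with
  | zero => simp
  | succ m ih =>
      rw [Finset.sum_range_succ, ih, Finset.sum_range_succ]
      push_cast
      ring


/-- with `A_0 = 0` and `A_{p+1} = Tr(exp(-t Δ_{p+1}^{cl}))`, where
`Δ_{p+1}^{cl}` is the restriction of `Δ_{p+1}` to `im d_p` (the hypothesis `h` — a provable
fact — expresses that `Δ_{p+1}` preserves `im d_p`), one has for every `t > 0`: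
`Σ_p (-1)^p p (Tr exp(-t Δ_p) - dim H^p) = Σ_p (-1)^p A_p`.  (On the right the `p = 0`
term vanishes, so the sum is written starting from `p = 1`.) -/
theorem alternating_weighted_heat_trace
    (n : ℕ) (C : ℕ → Type) [∀ p, NormedAddCommGroup (C p)]
    [∀ p, InnerProductSpace ℂ (C p)] [∀ p, FiniteDimensional ℂ (C p)]
    (d : ∀ p, C p →ₗ[ℂ] C (p + 1))
    (hd : ∀ p, d (p + 1) ∘ₗ d p = 0)
    (htriv : ∀ p, n < p → Module.finrank ℂ (C p) = 0)
    (h : ∀ p, ∀ x ∈ LinearMap.range (d p), Lap C d (p + 1) x ∈ LinearMap.range (d p))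
    (t : ℝ) (ht : 0 < t) :
    ∑ p ∈ Finset.range (n + 1),
        (-1 : ℂ) ^ p * (p : ℂ) * (heatTr (Lap C d p) t - (hdim C d p : ℂ)) =
      ∑ p ∈ Finset.range n, (-1 : ℂ) ^ (p + 1) * heatTr ((Lap C d (p + 1)).restrict (h p)) t := by
  classical
  set A : ℕ → ℂ := fun p => heatTr ((Lap C d (p + 1)).restrict (h p)) t with hA
  have hAn : A n = 0 := by
    haveI : Subsingleton (C (n+1)) :=
      Module.finrank_zero_iff.mp (htriv (n+1) (by omega))
    haveI : Subsingleton ↥(LinearMap.range (d n)) :=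
      ⟨fun a b => Subtype.ext (Subsingleton.elim _ _)⟩
    rw [hA]
    exact hTr'_subsingleton _ t
  have hstep : ∀ p : ℕ, heatTr (Lap C d (p+1)) t - (hdim C d (p+1) : ℂ) = A p + A (p+1) := by
    intro p
    rw [hodge_step C d hd h t p, hA]
    ring
  rw [Finset.sum_range_succ']
  simp only [pow_zero, Nat.cast_zero, mul_zero, zero_mul, add_zero, one_mul]
  have hmain : ∀ p ∈ Finset.range n,
      (-1 : ℂ) ^ (p+1) * ((p+1 : ℕ) : ℂ) * (heatTr (Lap C d (p+1)) t - (hdim C d (p+1) : ℂ))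
        = (-1:ℂ)^(p+1) * ((p:ℂ)+1) * (A p + A (p+1)) := by
    intro p _
    rw [hstep p]
    push_cast
    ring
  rw [Finset.sum_congr rfl hmain, alg_telescope, hAn]
  simp [hA]
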